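/- arXiv:1308.4944 — 2 statements merged into one kernel-verified Lean document; each statement's English description precedes it below -/
import Mathlib

section
/- Let (λ_k)_{k∈ℕ} be a nondecreasing sequence of nonnegative real numbers tending to infinity, with counting function N(λ) = Card{k ∈ ℕ : λ_k ≤ λ}, and assume N(λ) ∼ C λ^{n/2} as λ → ∞ for some constants C > 0 and n > 0. Then, as t → 0⁺, ∑_{k=0}^∞ e^{-λ_k t} ∼ C Γ(n/2 + 1) t^{-n/2}, i.e. the ratio of the two sides tends to 1. -/
open Filter Set

open MeasureTheory Real in
private lemma heat_count_tsum {A : Set ℕ} (hA : A.Finite) :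
    ∑' k : ℕ, (A.indicator (fun _ => (1 : ENNReal)) k) = (Nat.card A : ENNReal) := by
  classical
  rw [tsum_eq_sum (s := hA.toFinset)
    (fun b hb => Set.indicator_of_notMem (fun hbA => hb (hA.mem_toFinset.2 hbA)) _)]
  rw [Nat.card_coe_set_eq, Set.ncard_eq_toFinset_card A hA]
  rw [Finset.sum_congr rfl (fun b hb => Set.indicator_of_mem (hA.mem_toFinset.1 hb) _)]
  simp

open MeasureTheory Real in
private lemma heat_lintegral_shift {a : ℝ} (ha : 0 ≤ a) (f : ℝ → ENNReal) :
    ∫⁻ s in Ioi a, f s = ∫⁻ s in Ioi 0, (Ici a).indicator f s := by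
  have hae : ((Ioi (0:ℝ) ∩ Ici a : Set ℝ)) =ᵐ[volume] (Ici a : Set ℝ) := by
    rw [MeasureTheory.ae_eq_set]
    constructor
    · refine measure_mono_null (t := (∅ : Set ℝ)) (fun x hx => (hx.2 hx.1.2).elim) ?_
      simp
    · refine measure_mono_null (fun x hx => ?_) (measure_singleton 0)
      have hx2 : x ∉ Ioi (0:ℝ) ∩ Ici a := hx.2
      have : x ≤ 0 := by
        by_contra h
        exact hx2 ⟨lt_of_not_ge h, hx.1⟩
      have : x = 0 := le_antisymm this (le_trans ha hx.1)
      simp [this]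
  calc ∫⁻ s in Ioi a, f s = ∫⁻ s in Ici a, f s := setLIntegral_congr Ioi_ae_eq_Ici
    _ = ∫⁻ s in Ioi 0 ∩ Ici a, f s := (setLIntegral_congr hae).symm
    _ = ∫⁻ s, ((Ioi 0 ∩ Ici a).indicator f) s :=
        (lintegral_indicator (measurableSet_Ioi.inter measurableSet_Ici) _).symm
    _ = ∫⁻ s, (Ioi 0).indicator ((Ici a).indicator f) s := by rw [Set.indicator_indicator]
    _ = ∫⁻ s in Ioi 0, (Ici a).indicator f s := lintegral_indicator measurableSet_Ioi _

/-- Heat trace asymptotics from Weyl's law: if the counting function satisfies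
`N(λ) ∼ C λ^(n/2)` as `λ → ∞`, then `∑_k e^{-λ_k t} ∼ C Γ(n/2 + 1) t^(-n/2)` as `t → 0⁺`. -/
theorem heat_trace_asymptotics
    (Λ : ℕ → ℝ) (hΛmono : Monotone Λ) (hΛnonneg : ∀ k, 0 ≤ Λ k)
    (hΛtop : Tendsto Λ atTop atTop)
    (C n : ℝ) (hC : 0 < C) (hn : 0 < n)
    (hWeyl : Tendsto
      (fun x : ℝ => (Nat.card {k : ℕ | Λ k ≤ x} : ℝ) / (C * x ^ (n / 2)))
      atTop (nhds 1)) :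
    Tendsto
      (fun t : ℝ =>
        (∑' k : ℕ, Real.exp (-(Λ k * t))) /
          (C * Real.Gamma (n / 2 + 1) * t ^ (-(n / 2))))
      (nhdsWithin 0 (Ioi 0)) (nhds 1) := by
  classical
  open MeasureTheory Real in
  set l := nhdsWithin (0:ℝ) (Ioi 0) with hl
  set Nf : ℝ → ℝ := fun x => (Nat.card {k : ℕ | Λ k ≤ x} : ℝ) with hNfdef
  have hν : 0 < n / 2 := by linarith
  -- finiteness of sublevel sets
  have hfin : ∀ x : ℝ, {k : ℕ | Λ k ≤ x}.Finite := by
    intro x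
    obtain ⟨K, hK⟩ := eventually_atTop.mp (hΛtop.eventually (eventually_gt_atTop x))
    refine (Set.finite_Iio K).subset (fun k hk => ?_)
    by_contra h
    exact absurd hk.out (not_le.2 (hK k (not_lt.1 h)))
  have hNnonneg : ∀ x, 0 ≤ Nf x := fun x => Nat.cast_nonneg _
  have hNmono : Monotone Nf := by
    intro x y hxy
    exact Nat.cast_le.mpr (Nat.card_mono (hfin y) (fun k hk => le_trans hk.out hxy))
  have hNmeas : Measurable Nf := hNmono.measurable
  -- bound from Weyl's law
  obtain ⟨x0, hx0pos, hx0⟩ : ∃ x0 : ℝ, 0 < x0 ∧ ∀ x, x0 ≤ x → Nf x ≤ 2 * C * x ^ (n / 2) := by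
    obtain ⟨a, ha⟩ := eventually_atTop.mp (hWeyl.eventually_le_const (by norm_num : (1:ℝ) < 2))
    refine ⟨max a 1, lt_of_lt_of_le one_pos (le_max_right a 1), fun x hx => ?_⟩
    have hx1 : (0:ℝ) < x := lt_of_lt_of_le one_pos (le_trans (le_max_right a 1) hx)
    have hpos : 0 < C * x ^ (n / 2) := mul_pos hC (Real.rpow_pos_of_pos hx1 _)
    have := ha x (le_trans (le_max_left a 1) hx)
    rw [div_le_iff₀ hpos] at this
    calc Nf x ≤ 2 * (C * x ^ (n / 2)) := this
      _ = 2 * C * x ^ (n / 2) := by ring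
  -- pointwise bound
  have hbound : ∀ x : ℝ, 0 ≤ x → Nf x ≤ Nf x0 + 2 * C * x ^ (n / 2) := by
    intro x hx
    rcases le_or_gt x0 x with h | h
    · have := hx0 x h
      have h0 : 0 ≤ Nf x0 := hNnonneg x0
      linarith
    · have := hNmono h.le
      have h0 : 0 ≤ 2 * C * x ^ (n / 2) :=
        mul_nonneg (by linarith) (Real.rpow_nonneg hx _)
      linarith
  -- integrability of the dominating function
  have hbase : IntegrableOn (fun s : ℝ => Real.exp (-s)) (Ioi 0) := by
    simpa using exp_neg_integrableOn_Ioi 0 one_pos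
  have hgamma : IntegrableOn (fun s : ℝ => Real.exp (-s) * s ^ (n / 2)) (Ioi 0) := by
    have := Real.GammaIntegral_convergent (show (0:ℝ) < n / 2 + 1 by linarith)
    simpa using this
  have hBint : ∀ a b : ℝ, IntegrableOn
      (fun s : ℝ => Real.exp (-s) * (a + b * s ^ (n / 2))) (Ioi 0) := by
    intro a b
    have h1 : IntegrableOn (fun s : ℝ => a * Real.exp (-s) + b * (Real.exp (-s) * s ^ (n / 2)))
        (Ioi 0) := (hbase.const_mul a).add (hgamma.const_mul b)
    refine h1.congr_fun (fun s _ => by ring) measurableSet_Ioi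
  -- representation of heat trace
  have hrep : ∀ t : ℝ, 0 < t →
      (∑' k : ℕ, Real.exp (-(Λ k * t))) = ∫ s in Ioi (0:ℝ), Real.exp (-s) * Nf (s / t) := by
    intro t ht
    have hmeasInner : Measurable fun s : ℝ => Real.exp (-s) * Nf (s / t) :=
      (Real.measurable_exp.comp measurable_neg).mul (hNmeas.comp (measurable_id.div_const t))
    -- integrability
    have hIntegrable : IntegrableOn (fun s : ℝ => Real.exp (-s) * Nf (s / t)) (Ioi 0) := by
      refine (hBint (Nf x0) (2 * C / t ^ (n / 2))).mono' hmeasInner.aestronglyMeasurable ?_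
      filter_upwards [ae_restrict_mem measurableSet_Ioi] with s hs
      have hs0 : 0 < s := hs
      have hst : 0 ≤ s / t := le_of_lt (div_pos hs0 ht)
      have h1 : Nf (s / t) ≤ Nf x0 + 2 * C * (s / t) ^ (n / 2) := hbound _ hst
      have h2 : (s / t) ^ (n / 2) = s ^ (n / 2) / t ^ (n / 2) :=
        Real.div_rpow hs0.le ht.le _
      rw [Real.norm_eq_abs, abs_of_nonneg (mul_nonneg (Real.exp_nonneg _) (hNnonneg _))]
      have := mul_le_mul_of_nonneg_left h1 (Real.exp_nonneg (-s))
      calc Real.exp (-s) * Nf (s / t)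
          ≤ Real.exp (-s) * (Nf x0 + 2 * C * (s / t) ^ (n / 2)) := this
        _ = Real.exp (-s) * (Nf x0 + 2 * C / t ^ (n / 2) * s ^ (n / 2)) := by
            rw [h2]; ring
    -- lintegral identity
    set fexp : ℝ → ENNReal := fun s => ENNReal.ofReal (Real.exp (-s)) with hfexp
    have hmeasfexp : Measurable fexp :=
      ENNReal.measurable_ofReal.comp (Real.measurable_exp.comp measurable_neg)
    have h1 : ∀ k : ℕ, ENNReal.ofReal (Real.exp (-(Λ k * t)))
        = ∫⁻ s in Ioi (Λ k * t), fexp s := by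
      intro k
      rw [← integral_exp_neg_Ioi (Λ k * t)]
      exact ofReal_integral_eq_lintegral_ofReal
        (by have h : MeasureTheory.IntegrableOn (fun x : ℝ => Real.exp (-x)) (Ioi (Λ k * t)) := (by simpa using exp_neg_integrableOn_Ioi (Λ k * t) one_pos); exact h)
        (Filter.Eventually.of_forall fun s => Real.exp_nonneg _)
    have h3 : ∑' k : ℕ, ENNReal.ofReal (Real.exp (-(Λ k * t)))
        = ∫⁻ s in Ioi (0:ℝ), fexp s * ENNReal.ofReal (Nf (s / t)) := by
      calc ∑' k : ℕ, ENNReal.ofReal (Real.exp (-(Λ k * t)))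
          = ∑' k : ℕ, ∫⁻ s in Ioi (0:ℝ), (Ici (Λ k * t)).indicator fexp s := by
            refine tsum_congr fun k => ?_
            rw [h1 k, heat_lintegral_shift (mul_nonneg (hΛnonneg k) ht.le)]
        _ = ∫⁻ s in Ioi (0:ℝ), ∑' k : ℕ, (Ici (Λ k * t)).indicator fexp s := by
            refine (lintegral_tsum fun k => ?_).symm
            exact ((hmeasfexp.indicator measurableSet_Ici)).aemeasurable
        _ = ∫⁻ s in Ioi (0:ℝ), fexp s * ENNReal.ofReal (Nf (s / t)) := by
            refine setLIntegral_congr_fun measurableSet_Ioi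
              (fun s hs => ?_)
            have hkey : ∀ k : ℕ, (Ici (Λ k * t)).indicator fexp s
                = fexp s * ({k : ℕ | Λ k ≤ s / t}).indicator (fun _ => (1:ENNReal)) k := by
              intro k
              by_cases h : Λ k * t ≤ s
              · have h' : Λ k ≤ s / t := (le_div_iff₀ ht).2 h
                simp [Set.indicator_apply, Set.mem_Ici, Set.mem_setOf_eq, h, h']
              · have h' : ¬ Λ k ≤ s / t := fun hk => h ((le_div_iff₀ ht).1 hk)
                simp [Set.indicator_apply, Set.mem_Ici, Set.mem_setOf_eq, h, h']
            rw [tsum_congr hkey, ENNReal.tsum_mul_left, heat_count_tsum (hfin (s / t))]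
            congr 1
            rw [hNfdef]
            exact (ENNReal.ofReal_natCast _).symm
    -- convert to real integral
    have hofReal : ENNReal.ofReal (∫ s in Ioi (0:ℝ), Real.exp (-s) * Nf (s / t))
        = ∫⁻ s in Ioi (0:ℝ), fexp s * ENNReal.ofReal (Nf (s / t)) := by
      rw [ofReal_integral_eq_lintegral_ofReal hIntegrable
        (Filter.Eventually.of_forall fun s =>
          mul_nonneg (Real.exp_nonneg _) (hNnonneg _))]
      refine lintegral_congr fun s => ?_
      rw [ENNReal.ofReal_mul (Real.exp_nonneg _)]
    have hT : ∑' k : ℕ, ENNReal.ofReal (Real.exp (-(Λ k * t)))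
        = ENNReal.ofReal (∫ s in Ioi (0:ℝ), Real.exp (-s) * Nf (s / t)) := by
      rw [h3, hofReal]
    have hIntNonneg : 0 ≤ ∫ s in Ioi (0:ℝ), Real.exp (-s) * Nf (s / t) :=
      setIntegral_nonneg measurableSet_Ioi fun s _ =>
        mul_nonneg (Real.exp_nonneg _) (hNnonneg _)
    calc (∑' k : ℕ, Real.exp (-(Λ k * t)))
        = ∑' k : ℕ, (ENNReal.ofReal (Real.exp (-(Λ k * t)))).toReal := by
          refine tsum_congr fun k => ?_
          rw [ENNReal.toReal_ofReal (Real.exp_nonneg _)]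
      _ = (∑' k : ℕ, ENNReal.ofReal (Real.exp (-(Λ k * t)))).toReal :=
          (ENNReal.tsum_toReal_eq fun k => ENNReal.ofReal_ne_top).symm
      _ = ∫ s in Ioi (0:ℝ), Real.exp (-s) * Nf (s / t) := by
          rw [hT, ENNReal.toReal_ofReal hIntNonneg]
  -- main convergence via dominated convergence
  have hΓpos : 0 < Real.Gamma (n / 2 + 1) := Real.Gamma_pos_of_pos (by linarith)
  have hGammaInt : ∫ s in Ioi (0:ℝ), Real.exp (-s) * (C * s ^ (n / 2))
      = C * Real.Gamma (n / 2 + 1) := by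
    have h := Real.Gamma_eq_integral (show (0:ℝ) < n / 2 + 1 by linarith)
    have h2 : ∀ s : ℝ, Real.exp (-s) * (C * s ^ (n / 2))
        = C * (Real.exp (-s) * s ^ (n / 2 + 1 - 1)) := by
      intro s; rw [add_sub_cancel_right]; ring
    rw [show (fun s : ℝ => Real.exp (-s) * (C * s ^ (n / 2))) =
        fun s : ℝ => C * (Real.exp (-s) * s ^ (n / 2 + 1 - 1)) from funext h2]
    rw [MeasureTheory.integral_const_mul, ← h]
  have hmainInt : Tendsto
      (fun t : ℝ => ∫ s in Ioi (0:ℝ), Real.exp (-s) * (t ^ (n / 2) * Nf (s / t)))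
      l (nhds (C * Real.Gamma (n / 2 + 1))) := by
    rw [← hGammaInt]
    refine tendsto_integral_filter_of_dominated_convergence
      (fun s => Real.exp (-s) * (Nf x0 + 2 * C * s ^ (n / 2))) ?_ ?_ (hBint _ _) ?_
    · filter_upwards [self_mem_nhdsWithin] with t ht
      exact ((Real.measurable_exp.comp measurable_neg).mul
        ((hNmeas.comp (measurable_id.div_const t)).const_mul _)).aestronglyMeasurable
    · have ht1 : ∀ᶠ t : ℝ in l, t < 1 :=
        (eventually_lt_nhds one_pos).filter_mono nhdsWithin_le_nhds
      filter_upwards [self_mem_nhdsWithin, ht1] with t ht htl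
      filter_upwards [ae_restrict_mem measurableSet_Ioi] with s hs
      have hs0 : 0 < s := hs
      have ht0 : 0 < t := ht
      have htp : 0 < t ^ (n / 2) := Real.rpow_pos_of_pos ht0 _
      have hkey : t ^ (n / 2) * Nf (s / t) ≤ Nf x0 + 2 * C * s ^ (n / 2) := by
        rcases le_or_gt x0 (s / t) with h | h
        · have h1 := hx0 _ h
          have h2 : (s / t) ^ (n / 2) = s ^ (n / 2) / t ^ (n / 2) :=
            Real.div_rpow hs0.le ht0.le _
          have h3 : t ^ (n / 2) * Nf (s / t) ≤ t ^ (n / 2) * (2 * C * (s / t) ^ (n / 2)) :=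
            mul_le_mul_of_nonneg_left h1 htp.le
          have h4 : t ^ (n / 2) * (2 * C * (s / t) ^ (n / 2)) = 2 * C * s ^ (n / 2) := by
            rw [h2]; field_simp
          have h5 : 0 ≤ Nf x0 := hNnonneg x0
          linarith [h3, h4 ▸ h3]
        · have h1 : Nf (s / t) ≤ Nf x0 := hNmono h.le
          have h2 : t ^ (n / 2) ≤ 1 := Real.rpow_le_one ht0.le htl.le hν.le
          have h3 : t ^ (n / 2) * Nf (s / t) ≤ 1 * Nf x0 :=
            mul_le_mul h2 h1 (hNnonneg _) one_pos.le
          have h4 : 0 ≤ 2 * C * s ^ (n / 2) :=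
            mul_nonneg (by linarith) (Real.rpow_nonneg hs0.le _)
          linarith
      rw [Real.norm_eq_abs, abs_of_nonneg (mul_nonneg (Real.exp_nonneg _)
        (mul_nonneg htp.le (hNnonneg _)))]
      exact mul_le_mul_of_nonneg_left hkey (Real.exp_nonneg _)
    · filter_upwards [ae_restrict_mem measurableSet_Ioi] with s hs
      have hs0 : 0 < s := hs
      have hst : Tendsto (fun t : ℝ => s / t) l atTop := by
        simpa [div_eq_mul_inv] using tendsto_inv_nhdsGT_zero.const_mul_atTop hs0
      have h4 := (hWeyl.comp hst).mul_const (C * s ^ (n / 2))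
      rw [one_mul] at h4
      have heq : ∀ᶠ t : ℝ in l,
          Nf (s / t) / (C * (s / t) ^ (n / 2)) * (C * s ^ (n / 2))
          = t ^ (n / 2) * Nf (s / t) := by
        filter_upwards [self_mem_nhdsWithin] with t ht
        have ht0 : 0 < t := ht
        have h2 : (s / t) ^ (n / 2) = s ^ (n / 2) / t ^ (n / 2) :=
          Real.div_rpow hs0.le ht0.le _
        have hsp : (0:ℝ) < s ^ (n / 2) := Real.rpow_pos_of_pos hs0 _
        have htp : (0:ℝ) < t ^ (n / 2) := Real.rpow_pos_of_pos ht0 _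
        rw [h2]
        field_simp
      exact (h4.congr' heq).const_mul (Real.exp (-s))
  -- conclude
  have hfinal : Tendsto
      (fun t : ℝ => t ^ (n / 2) * (∑' k : ℕ, Real.exp (-(Λ k * t))))
      l (nhds (C * Real.Gamma (n / 2 + 1))) := by
    refine hmainInt.congr' ?_
    filter_upwards [self_mem_nhdsWithin] with t ht
    have ht0 : 0 < t := ht
    rw [hrep t ht0]
    rw [show (fun s : ℝ => Real.exp (-s) * (t ^ (n / 2) * Nf (s / t)))
        = fun s : ℝ => t ^ (n / 2) * (Real.exp (-s) * Nf (s / t)) from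
        funext fun s => by ring]
    rw [MeasureTheory.integral_const_mul]
  have hCΓ : (0:ℝ) < C * Real.Gamma (n / 2 + 1) := mul_pos hC hΓpos
  have h5 := hfinal.div_const (C * Real.Gamma (n / 2 + 1))
  rw [div_self hCΓ.ne'] at h5
  refine h5.congr' ?_
  filter_upwards [self_mem_nhdsWithin] with t ht
  have ht0 : 0 < t := ht
  have htp : (0:ℝ) < t ^ (n / 2) := Real.rpow_pos_of_pos ht0 _
  rw [Real.rpow_neg ht0.le]
  field_simp
  ring_nf
  exact tsum_congr fun k => by rw [mul_comm]
end

section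
/- Let (λ_k)_{k∈ℕ} be a nondecreasing sequence of nonnegative real numbers tending to infinity whose counting function N(λ) = Card{k ∈ ℕ : λ_k ≤ λ} satisfies N(λ) ∼ C λ^{n/2} as λ → ∞ for some C > 0 and n > 0, and let ψ : (0,∞) → (0,∞) be strictly increasing and regularly varying at infinity with index r > 0. Then for every t > 0 the series ∑_{k=0}^∞ e^{-ψ(λ_k) t} converges (where the summand is interpreted as 1 if λ_k = 0 and ψ is extended by ψ(0) = 0). -/
open Filter Set Asymptotics

lemma exp_rpow_summable (E p : ℝ) (hE : 0 < E) (hp : 0 < p) :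
    Summable fun k : ℕ => Real.exp (-(E * (k:ℝ) ^ p)) := by
  have hsum : Summable fun k : ℕ => ((k:ℝ) ^ (-2:ℝ)) := by
    rw [Real.summable_nat_rpow]; norm_num
  apply summable_of_isBigO_nat hsum
  apply IsBigO.of_bound 1
  have htop : Tendsto (fun k : ℕ => (k:ℝ) ^ (p/2)) atTop atTop :=
    (tendsto_rpow_atTop (by positivity)).comp tendsto_natCast_atTop_atTop
  filter_upwards [htop.eventually_ge_atTop (4/(p*E)), eventually_ge_atTop 1] with k hk hk1
  have hk0 : (0:ℝ) < (k:ℝ) := by exact_mod_cast hk1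
  set K := (k:ℝ) ^ (p/2) with hK
  have hKnn : 0 ≤ K := Real.rpow_nonneg hk0.le _
  have hlog : Real.log (k:ℝ) ≤ K / (p/2) :=
    Real.log_le_rpow_div hk0.le (by positivity)
  have hpow : (k:ℝ) ^ p = K * K := by
    rw [hK, ← Real.rpow_add hk0]; ring_nf
  have h2 : 2 * Real.log (k:ℝ) ≤ E * (k:ℝ) ^ p := by
    rw [hpow]
    rw [div_div_eq_mul_div] at hlog
    rw [div_le_iff₀ (by positivity)] at hk
    have := mul_le_mul_of_nonneg_right hk hKnn
    rw [le_div_iff₀ hp] at hlog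
    nlinarith
  have hkpos : (0:ℝ) < (k:ℝ) ^ (-2:ℝ) := Real.rpow_pos_of_pos hk0 _
  rw [Real.norm_eq_abs, Real.norm_eq_abs, abs_of_pos (Real.exp_pos _), abs_of_pos hkpos, one_mul]
  rw [show (k:ℝ) ^ (-2:ℝ) = Real.exp (-2 * Real.log k) by
    rw [← Real.log_rpow hk0, Real.exp_log (Real.rpow_pos_of_pos hk0 _)]]
  exact Real.exp_le_exp.mpr (by linarith)

lemma rv_lower_bound (ψ : ℝ → ℝ) (r : ℝ) (hr : 0 < r)
    (hψmono : StrictMonoOn ψ (Ioi 0)) (hψpos : ∀ x > (0:ℝ), 0 < ψ x)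
    (hψRV : Tendsto (fun x => ψ (2 * x) / ψ x) atTop (nhds ((2:ℝ) ^ (r:ℝ)))) :
    ∃ c > 0, ∃ x0 ≥ (1:ℝ), ∀ x ≥ x0, c * x ^ (r/2) ≤ ψ x := by
  set q : ℝ := 2 ^ (r/2) with hqdef
  have hq1 : 1 < q := by
    rw [hqdef, Real.one_lt_rpow_iff_of_pos two_pos]
    left; constructor <;> [norm_num; positivity]
  have hqlt : q < 2 ^ r := by
    rw [hqdef]
    exact (Real.rpow_lt_rpow_left_iff one_lt_two).mpr (by linarith)
  have hev := hψRV.eventually (eventually_gt_nhds hqlt)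
  rw [eventually_atTop] at hev
  obtain ⟨x1, hx1⟩ := hev
  set x0 := max x1 1 with hx0def
  have hx01 : (1:ℝ) ≤ x0 := le_max_right _ _
  have hx0pos : (0:ℝ) < x0 := lt_of_lt_of_le one_pos hx01
  have hdouble : ∀ x ≥ x0, q * ψ x ≤ ψ (2 * x) := by
    intro x hx
    have hxpos : 0 < x := lt_of_lt_of_le hx0pos hx
    have := hx1 x (le_trans (le_max_left _ _) hx)
    have hψx : 0 < ψ x := hψpos x hxpos
    rw [lt_div_iff₀ hψx] at this
    linarith
  have hind : ∀ m : ℕ, q ^ m * ψ x0 ≤ ψ (2 ^ m * x0) := by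
    intro m
    induction m with
    | zero => simp
    | succ m ih =>
      have h2m : (1:ℝ) ≤ 2 ^ m := one_le_pow₀ (by norm_num)
      have hge : 2 ^ m * x0 ≥ x0 := le_mul_of_one_le_left hx0pos.le h2m
      have := hdouble _ hge
      have hqm : (0:ℝ) < q ^ m := pow_pos (by linarith) m
      calc q ^ (m+1) * ψ x0 = q * (q ^ m * ψ x0) := by ring
        _ ≤ q * ψ (2 ^ m * x0) := by
            apply mul_le_mul_of_nonneg_left ih (by linarith)
        _ ≤ ψ (2 * (2 ^ m * x0)) := this
        _ = ψ (2 ^ (m+1) * x0) := by ring_nf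
  have hψx0 : 0 < ψ x0 := hψpos x0 hx0pos
  refine ⟨ψ x0 / (q * x0 ^ (r/2)), div_pos hψx0 (by positivity), x0, hx01, ?_⟩
  intro x hx
  have hxpos : 0 < x := lt_of_lt_of_le hx0pos hx
  have hxx0 : 1 ≤ x / x0 := (one_le_div hx0pos).mpr hx
  set m := ⌊Real.logb 2 (x / x0)⌋₊ with hmdef
  have hlogb0 : 0 ≤ Real.logb 2 (x / x0) := Real.logb_nonneg one_lt_two hxx0
  have hfl : (m:ℝ) ≤ Real.logb 2 (x / x0) := Nat.floor_le hlogb0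
  have hfl2 : Real.logb 2 (x / x0) < (m:ℝ) + 1 := Nat.lt_floor_add_one _
  have h2m_le : (2:ℝ) ^ m ≤ x / x0 := by
    calc (2:ℝ) ^ m = (2:ℝ) ^ (m:ℝ) := by rw [Real.rpow_natCast]
      _ ≤ (2:ℝ) ^ Real.logb 2 (x / x0) :=
          Real.rpow_le_rpow_left_iff one_lt_two |>.mpr hfl
      _ = x / x0 := Real.rpow_logb two_pos (by norm_num) (by positivity)
  have h2m_lt : x / x0 < (2:ℝ) ^ ((m:ℝ) + 1) := by
    calc x / x0 = (2:ℝ) ^ Real.logb 2 (x / x0) :=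
        (Real.rpow_logb two_pos (by norm_num) (by positivity)).symm
      _ < (2:ℝ) ^ ((m:ℝ) + 1) :=
          Real.rpow_lt_rpow_left_iff one_lt_two |>.mpr hfl2
  have hstep : ψ (2 ^ m * x0) ≤ ψ x := by
    rcases eq_or_lt_of_le ((le_div_iff₀ hx0pos).mp h2m_le) with h | h
    · rw [h]
    · exact (hψmono (mem_Ioi.mpr (show (0:ℝ) < 2 ^ m * x0 by positivity))
        (mem_Ioi.mpr hxpos) h).le
  have hmain : q ^ m * ψ x0 ≤ ψ x := le_trans (hind m) hstep
  have hxpow : (x / x0) ^ (r/2) ≤ q * q ^ m := by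
    have h1 : (x / x0) ^ (r/2) ≤ ((2:ℝ) ^ ((m:ℝ)+1)) ^ (r/2) :=
      Real.rpow_le_rpow (by positivity) h2m_lt.le (by positivity)
    have h2 : ((2:ℝ) ^ ((m:ℝ)+1)) ^ (r/2) = q * q ^ m := by
      rw [hqdef, ← Real.rpow_natCast ((2:ℝ)^(r/2)) m, ← Real.rpow_mul (by norm_num),
        ← Real.rpow_mul (by norm_num), ← Real.rpow_add two_pos]
      ring_nf
    linarith [h1, h2.symm.le]
  have hqpos : (0:ℝ) < q := by linarith
  have hx0rp : (0:ℝ) < x0 ^ (r/2) := Real.rpow_pos_of_pos hx0pos _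
  have hqmpos : (0:ℝ) < q ^ m := pow_pos hqpos m
  calc ψ x0 / (q * x0 ^ (r/2)) * x ^ (r/2)
      = ψ x0 * ((x / x0) ^ (r/2)) / q := by
        rw [Real.div_rpow hxpos.le hx0pos.le]; field_simp
    _ ≤ ψ x0 * (q * q ^ m) / q := by gcongr
    _ = q ^ m * ψ x0 := by field_simp
    _ ≤ ψ x := hmain

lemma lambda_lower_bound (Λ : ℕ → ℝ) (hΛmono : Monotone Λ) (hΛtop : Tendsto Λ atTop atTop)
    (C n : ℝ) (hC : 0 < C) (hn : 0 < n)
    (hWeyl : Tendsto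
      (fun x : ℝ => (Nat.card {k : ℕ | Λ k ≤ x} : ℝ) / (C * x ^ (n / 2)))
      atTop (nhds 1)) :
    ∃ D > (0:ℝ), ∃ K : ℕ, ∀ k ≥ K, D * (k:ℝ) ^ (2/n) ≤ Λ k := by
  have hfin : ∀ x : ℝ, {k : ℕ | Λ k ≤ x}.Finite := by
    intro x
    obtain ⟨K, hK⟩ := (hΛtop.eventually_gt_atTop x).exists_forall_of_atTop
    apply (finite_Iio K).subset
    intro k hk
    simp only [mem_Iio]
    by_contra hkK
    exact absurd hk (not_le.mpr (hK k (not_lt.mp hkK)))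
  have hcount : ∀ k : ℕ, (k : ℝ) + 1 ≤ (Nat.card {j : ℕ | Λ j ≤ Λ k} : ℝ) := by
    intro k
    have hsub : Iic k ⊆ {j : ℕ | Λ j ≤ Λ k} := fun j hj => hΛmono (mem_Iic.mp hj)
    have := Nat.card_mono (hfin (Λ k)) hsub
    have hIic : Nat.card (Iic k : Set ℕ) = k + 1 := by
      simp [Nat.card_eq_card_toFinset]
    rw [hIic] at this
    exact_mod_cast this
  have hW2 := (hWeyl.eventually (eventually_lt_nhds
    (by norm_num : (1:ℝ) < 2))).exists_forall_of_atTop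
  obtain ⟨X, hX⟩ := hW2
  obtain ⟨K, hK⟩ := (hΛtop.eventually_ge_atTop (max X 1)).exists_forall_of_atTop
  refine ⟨(1 / (2 * C)) ^ (2/n), by positivity, K, ?_⟩
  intro k hk
  have hΛk : Λ k ≥ max X 1 := hK k hk
  have hΛk1 : (1:ℝ) ≤ Λ k := le_trans (le_max_right _ _) hΛk
  have hΛkpos : (0:ℝ) < Λ k := lt_of_lt_of_le one_pos hΛk1
  have hrat := hX (Λ k) (le_trans (le_max_left _ _) hΛk)
  have hden : (0:ℝ) < C * Λ k ^ (n/2) := by positivity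
  rw [div_lt_iff₀ hden] at hrat
  have hNk := hcount k
  have hub : (k:ℝ) + 1 ≤ 2 * C * Λ k ^ (n/2) := by
    calc (k:ℝ) + 1 ≤ (Nat.card {j : ℕ | Λ j ≤ Λ k} : ℝ) := hNk
      _ ≤ 2 * (C * Λ k ^ (n/2)) := hrat.le
      _ = 2 * C * Λ k ^ (n/2) := by ring
  have h1 : (k:ℝ) / (2 * C) ≤ Λ k ^ (n/2) := by
    rw [div_le_iff₀ (by positivity)]
    linarith
  have h2 : ((k:ℝ) / (2 * C)) ^ (2/n) ≤ (Λ k ^ (n/2)) ^ (2/n) :=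
    Real.rpow_le_rpow (by positivity) h1 (by positivity)
  have h3 : (Λ k ^ (n/2)) ^ (2/n) = Λ k := by
    rw [← Real.rpow_mul hΛkpos.le, show n/2*(2/n) = 1 by field_simp, Real.rpow_one]
  have h4 : (1 / (2 * C)) ^ (2/n) * (k:ℝ) ^ (2/n) = ((k:ℝ) / (2 * C)) ^ (2/n) := by
    rw [← Real.mul_rpow (by positivity) (Nat.cast_nonneg k)]
    congr 1
    ring
  rw [h4]
  rw [h3] at h2
  exact h2

/-- If the counting function satisfies `N(λ) ∼ C λ^(n/2)` as `λ → ∞` and `ψ` is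
strictly increasing on `(0,∞)`, positive on `(0,∞)`, regularly varying at infinity with
index `r > 0`, and extended by `ψ(0) = 0` (so the summand is `1` when `λ_k = 0`), then for
every `t > 0` the series `∑_k e^{-ψ(λ_k) t}` converges. -/
theorem subordinate_trace_summable
    (Λ : ℕ → ℝ) (hΛmono : Monotone Λ) (hΛnonneg : ∀ k, 0 ≤ Λ k)
    (hΛtop : Tendsto Λ atTop atTop)
    (C n : ℝ) (hC : 0 < C) (hn : 0 < n)
    (hWeyl : Tendsto
      (fun x : ℝ => (Nat.card {k : ℕ | Λ k ≤ x} : ℝ) / (C * x ^ (n / 2)))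
      atTop (nhds 1))
    (ψ : ℝ → ℝ) (r : ℝ) (hr : 0 < r)
    (hψ0 : ψ 0 = 0)
    (hψmono : StrictMonoOn ψ (Ioi 0))
    (hψpos : ∀ x > (0 : ℝ), 0 < ψ x)
    (hψRV : ∀ a > (0 : ℝ), Tendsto (fun x => ψ (a * x) / ψ x) atTop (nhds (a ^ r))) :
    ∀ t > (0 : ℝ), Summable fun k : ℕ => Real.exp (-(ψ (Λ k) * t)) := by
  intro t ht
  obtain ⟨c, hc, x0, hx01, hψlb⟩ := rv_lower_bound ψ r hr hψmono hψpos (hψRV 2 two_pos)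
  obtain ⟨D, hD, K, hΛlb⟩ := lambda_lower_bound Λ hΛmono hΛtop C n hC hn hWeyl
  have htop2 : Tendsto (fun k : ℕ => (k:ℝ) ^ (2/n)) atTop atTop :=
    (tendsto_rpow_atTop (by positivity)).comp tendsto_natCast_atTop_atTop
  set E := c * D ^ (r/2) * t with hE
  have hEpos : 0 < E := by positivity
  apply summable_of_isBigO_nat (exp_rpow_summable E (r/n) hEpos (by positivity))
  apply IsBigO.of_bound 1
  filter_upwards [htop2.eventually_ge_atTop (x0/D), eventually_ge_atTop K] with k hk hkK
  have hΛk := hΛlb k hkK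
  have hDk : x0 ≤ D * (k:ℝ) ^ (2/n) := by
    rw [div_le_iff₀ hD] at hk; linarith
  have hΛx0 : x0 ≤ Λ k := le_trans hDk hΛk
  have h1 := hψlb (Λ k) hΛx0
  have hknn : (0:ℝ) ≤ (k:ℝ) ^ (2/n) := Real.rpow_nonneg (Nat.cast_nonneg k) _
  have h2 : (D * (k:ℝ) ^ (2/n)) ^ (r/2) ≤ (Λ k) ^ (r/2) :=
    Real.rpow_le_rpow (by positivity) hΛk (by positivity)
  have h3 : (D * (k:ℝ) ^ (2/n)) ^ (r/2) = D ^ (r/2) * (k:ℝ) ^ (r/n) := by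
    rw [Real.mul_rpow hD.le hknn, ← Real.rpow_mul (Nat.cast_nonneg k),
      show 2/n*(r/2) = r/n by ring]
  have hbound : E * (k:ℝ) ^ (r/n) ≤ ψ (Λ k) * t := by
    rw [hE]
    have : c * (D ^ (r/2) * (k:ℝ) ^ (r/n)) ≤ ψ (Λ k) := by
      rw [← h3]
      calc c * (D * (k:ℝ) ^ (2/n)) ^ (r/2) ≤ c * (Λ k) ^ (r/2) :=
            mul_le_mul_of_nonneg_left h2 hc.le
        _ ≤ ψ (Λ k) := h1
    calc c * D ^ (r/2) * t * (k:ℝ) ^ (r/n)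
        = (c * (D ^ (r/2) * (k:ℝ) ^ (r/n))) * t := by ring
      _ ≤ ψ (Λ k) * t := mul_le_mul_of_nonneg_right this ht.le
  rw [Real.norm_eq_abs, Real.norm_eq_abs, abs_of_pos (Real.exp_pos _),
    abs_of_pos (Real.exp_pos _), one_mul]
  exact Real.exp_le_exp.mpr (by linarith)
end
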